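/- Let X ∼ N(0, Σ) be a p-dimensional Gaussian vector with Σ positive definite, and let s ∈ R^p be such that the 2p × 2p matrix Γ(s) with diagonal blocks Σ and off-diagonal blocks Σ − diag(s) is positive semidefinite. If (X, X̃) is jointly Gaussian with mean zero and covariance Γ(s), then (X, X̃) satisfies pairwise exchangeability: for every j, swapping X_j and X̃_j preserves the joint Gaussian distribution. -/

import Mathlib

open MeasureTheory ProbabilityTheory Matrix

/-- A measure `ν` on `ι → ℝ` is a centered Gaussian with covariance matrix `M`
if every linear functional `x ↦ ∑ i, a i * x i` has law `N(0, aᵀ M a)`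
(Cramér–Wold characterization of multivariate Gaussians). -/
def IsCenteredGaussianVec {ι : Type*} [Fintype ι] (ν : Measure (ι → ℝ))
    (M : Matrix ι ι ℝ) : Prop :=
  ∀ a : ι → ℝ,
    ν.map (fun x => ∑ i, a i * x i) =
      gaussianReal 0 (Real.toNNReal (a ⬝ᵥ M.mulVec a))

/-- The knockoff covariance matrix `Γ(s)` with diagonal blocks `Σ` and
off-diagonal blocks `Σ − diag(s)`, indexed by `Fin p ⊕ Fin p`. -/
def knockoffCov {p : ℕ} (Sig : Matrix (Fin p) (Fin p) ℝ) (s : Fin p → ℝ) :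
    Matrix (Fin p ⊕ Fin p) (Fin p ⊕ Fin p) ℝ :=
  Matrix.fromBlocks Sig (Sig - Matrix.diagonal s) (Sig - Matrix.diagonal s) Sig

/-- Swap the coordinates `inl j` and `inr j` of a `Fin p ⊕ Fin p`-indexed
vector. -/
def swapCoord {p : ℕ} (j : Fin p) :
    ((Fin p ⊕ Fin p) → ℝ) → ((Fin p ⊕ Fin p) → ℝ) :=
  fun x k =>
    if k = Sum.inl j then x (Sum.inr j)
    else if k = Sum.inr j then x (Sum.inl j)
    else x k



section AuxCramerWold
open FourierTransform Real Complex Filter Metric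
open scoped RealInnerProductSpace Topology Manifold ENNReal


variable {V : Type*} [NormedAddCommGroup V] [InnerProductSpace ℝ V]
  [MeasurableSpace V] [BorelSpace V] [FiniteDimensional ℝ V]

lemma charKer_continuous : Continuous fun p : V × V => (Real.fourierChar ⟪p.2, p.1⟫ : ℂ) := by
  exact continuous_subtype_val.comp ((Real.continuous_fourierChar).comp (continuous_inner.comp (continuous_snd.prodMk continuous_fst)))

lemma integral_eq_of_charFun_aux (μ ν : Measure V) [IsProbabilityMeasure μ]
    [IsProbabilityMeasure ν]
    (h : ∀ w : V, ∫ v, (Real.fourierChar ⟪w, v⟫ : ℂ) ∂μ = ∫ v, (Real.fourierChar ⟪w, v⟫ : ℂ) ∂ν)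
    (f : V → ℂ) (hf_cont : Continuous f) (hfi : Integrable f volume)
    (hffi : Integrable (𝓕 f) volume) (hffc : Continuous (𝓕 f)) :
    ∫ v, f v ∂μ = ∫ v, f v ∂ν := by
  have key : ∀ (ρ : Measure V), IsProbabilityMeasure ρ →
      ∫ v, f v ∂ρ = ∫ w, (∫ v, (Real.fourierChar ⟪w, v⟫ : ℂ) ∂ρ) * (𝓕 f w) ∂volume := by
    intro ρ hρ
    have hinv : ∀ v, f v = ∫ w, (Real.fourierChar ⟪w, v⟫ : ℂ) * (𝓕 f w) ∂volume := by
      intro v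
      have h2 := hfi.fourierInv_fourier_eq hffi (hf_cont.continuousAt (x := v))
      rw [← h2, Real.fourierInv_eq]
      simp only [Circle.smul_def, smul_eq_mul]
    have hcont : Continuous (Function.uncurry (fun (v : V) (w : V) =>
        (Real.fourierChar ⟪w, v⟫ : ℂ) * (𝓕 f w))) :=
      charKer_continuous.mul (hffc.comp continuous_snd)
    have hint : Integrable (Function.uncurry (fun (v : V) (w : V) =>
        (Real.fourierChar ⟪w, v⟫ : ℂ) * (𝓕 f w))) (ρ.prod volume) := by
      refine (integrable_prod_iff hcont.aestronglyMeasurable).2 ⟨?_, ?_⟩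
      · filter_upwards with v
        exact hffi.bdd_mul ((charKer_continuous.comp (continuous_const.prodMk continuous_id)).aestronglyMeasurable) (c := 1) (.of_forall fun _ => by simp [Circle.norm_coe])
      · have : ∀ v : V, (∫ w, ‖(Real.fourierChar ⟪w, v⟫ : ℂ) * (𝓕 f w)‖ ∂volume)
            = ∫ w, ‖𝓕 f w‖ ∂volume := by
          intro v; congr 1 with w; simp [norm_mul, Circle.norm_coe]
        simpa [Function.uncurry, this, Circle.norm_coe] using integrable_const (∫ w, ‖𝓕 f w‖ ∂volume) (μ := ρ)
    calc ∫ v, f v ∂ρ = ∫ v, ∫ w, (Real.fourierChar ⟪w, v⟫ : ℂ) * (𝓕 f w) ∂volume ∂ρ := by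
          simp_rw [← hinv]
      _ = ∫ w, ∫ v, (Real.fourierChar ⟪w, v⟫ : ℂ) * (𝓕 f w) ∂ρ ∂volume :=
          integral_integral_swap hint
      _ = ∫ w, (∫ v, (Real.fourierChar ⟪w, v⟫ : ℂ) ∂ρ) * (𝓕 f w) ∂volume := by
          congr 1 with w; rw [integral_mul_const]
  rw [key μ inferInstance, key ν inferInstance]
  congr 1 with w
  rw [h w]


variable {V : Type*} [NormedAddCommGroup V] [InnerProductSpace ℝ V]
  [MeasurableSpace V] [BorelSpace V] [FiniteDimensional ℝ V]

noncomputable def mySchwartz (f : V → ℂ) (h1 : ContDiff ℝ (⊤ : ℕ∞) f)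
    (h2 : HasCompactSupport f) : SchwartzMap V ℂ where
  toFun := f
  smooth' := h1
  decay' := by
    intro k n
    have hc : Continuous fun x : V => ‖x‖ ^ k * ‖iteratedFDeriv ℝ n f x‖ :=
      (continuous_norm.pow k).mul (h1.continuous_iteratedFDeriv (by exact_mod_cast le_top)).norm
    have hcs : HasCompactSupport fun x : V => ‖x‖ ^ k * ‖iteratedFDeriv ℝ n f x‖ :=
      ((h2.iteratedFDeriv n).norm).mul_left
    obtain ⟨C, hC⟩ := hc.bddAbove_range_of_hasCompactSupport hcs
    exact ⟨C, fun x => hC ⟨x, rfl⟩⟩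

lemma mySchwartz_coe (f : V → ℂ) (h1 : ContDiff ℝ (⊤ : ℕ∞) f) (h2 : HasCompactSupport f) :
    ⇑(mySchwartz f h1 h2) = f := rfl

lemma exists_my_bump (K : Set V) (hK : IsCompact K) {δ : ℝ} (hδ : 0 < δ) :
    ∃ g : V → ℝ, ContDiff ℝ (⊤ : ℕ∞) g ∧ HasCompactSupport g ∧ Set.EqOn g 1 K ∧
      (∀ x, g x ∈ Set.Icc (0:ℝ) 1) ∧ ∀ x ∉ Metric.thickening δ K, g x = 0 := by
  obtain ⟨f, hf0, hf1, hf01⟩ := exists_contMDiffMap_zero_one_of_isClosed (n := (⊤ : ℕ∞)) (𝓘(ℝ, V))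
    (Metric.isOpen_thickening (δ := δ) (E := K)).isClosed_compl hK.isClosed
    (disjoint_compl_left.mono_right (Metric.self_subset_thickening hδ K))
  have hsupp : Function.support (⇑f) ⊆ Metric.thickening δ K := by
    intro x hx
    by_contra hxK
    exact hx (hf0 hxK)
  refine ⟨f, contMDiff_iff_contDiff.mp f.contMDiff, ?_, hf1, hf01, fun x hx => hf0 hx⟩
  have : tsupport (⇑f) ⊆ Metric.cthickening δ K :=
    (closure_mono hsupp).trans (Metric.closure_thickening_subset_cthickening δ K)
  exact IsCompact.of_isClosed_subset (hK.cthickening) (isClosed_tsupport _) this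

lemma measure_eq_of_charFun (μ ν : Measure V) [IsProbabilityMeasure μ] [IsProbabilityMeasure ν]
    (h : ∀ w : V, ∫ v, (Real.fourierChar ⟪w, v⟫ : ℂ) ∂μ = ∫ v, (Real.fourierChar ⟪w, v⟫ : ℂ) ∂ν) :
    μ = ν := by
  -- Step 1: integrals of smooth compactly supported real functions agree
  have hsm : ∀ g : V → ℝ, ContDiff ℝ (⊤ : ℕ∞) g → HasCompactSupport g →
      ∫ x, g x ∂μ = ∫ x, g x ∂ν := by
    intro g hg hgc
    set fc : V → ℂ := fun x => (g x : ℂ) with hfc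
    have h1 : ContDiff ℝ (⊤ : ℕ∞) fc := Complex.ofRealCLM.contDiff.comp hg
    have h2 : HasCompactSupport fc := hgc.comp_left (g := Complex.ofReal) Complex.ofReal_zero
    set S : SchwartzMap V ℂ := mySchwartz fc h1 h2 with hS
    have hSc : ⇑S = fc := mySchwartz_coe fc h1 h2
    have hfi : Integrable fc volume := by rw [← hSc]; exact S.integrable
    have hF : 𝓕 fc = ⇑(SchwartzMap.fourierTransformCLM ℂ S) := by
      rw [SchwartzMap.fourierTransformCLM_apply, SchwartzMap.fourier_coe, hSc]
    have hffi : Integrable (𝓕 fc) volume := by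
      rw [hF]; exact (SchwartzMap.fourierTransformCLM ℂ S).integrable
    have hffc : Continuous (𝓕 fc) := by rw [hF]; exact (SchwartzMap.fourierTransformCLM ℂ S).continuous
    have key := integral_eq_of_charFun_aux μ ν h fc (h1.continuous) hfi hffi hffc
    have h1' : ((∫ x, g x ∂μ : ℝ) : ℂ) = ((∫ x, g x ∂ν : ℝ) : ℂ) :=
      (integral_ofReal (f := g) (μ := μ)).symm.trans
        (key.trans (integral_ofReal (f := g) (μ := ν)))
    exact_mod_cast h1'
  -- Step 2: measures of compact sets agree
  have hcompact : ∀ K : Set V, IsCompact K → μ K = ν K := by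
    intro K hK
    have hbump : ∀ n : ℕ, ∃ g : V → ℝ, ContDiff ℝ (⊤ : ℕ∞) g ∧ HasCompactSupport g ∧
        Set.EqOn g 1 K ∧ (∀ x, g x ∈ Set.Icc (0:ℝ) 1) ∧
        ∀ x ∉ Metric.thickening (1 / (n + 1) : ℝ) K, g x = 0 :=
      fun n => exists_my_bump K hK (by positivity)
    choose g hg1 hg2 hg3 hg4 hg5 using hbump
    have htendsto : ∀ ρ : Measure V, IsProbabilityMeasure ρ →
        Tendsto (fun n => ∫ x, g n x ∂ρ) atTop (𝓝 ((ρ K).toReal)) := by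
      intro ρ hρ
      have hind : (ρ K).toReal = ∫ x, Set.indicator K (1 : V → ℝ) x ∂ρ :=
        (integral_indicator_one hK.measurableSet).symm
      rw [hind]
      apply tendsto_integral_of_dominated_convergence (fun _ => (1:ℝ))
      · exact fun n => ((hg1 n).continuous).aestronglyMeasurable
      · exact integrable_const 1
      · intro n
        filter_upwards with x
        have := hg4 n x
        rw [Real.norm_eq_abs, abs_le]
        constructor <;> linarith [this.1, this.2]
      · filter_upwards with x
        by_cases hx : x ∈ K
        · have hgx : ∀ n, g n x = 1 := fun n => hg3 n hx
          simp only [hgx, Set.indicator_of_mem hx, Pi.one_apply]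
          exact tendsto_const_nhds
        · have hd : EMetric.infEdist x K ≠ 0 := by
            intro h0
            exact hx (hK.isClosed.closure_eq ▸ EMetric.mem_closure_iff_infEdist_zero.2 h0)
          obtain ⟨m, hm⟩ := ENNReal.exists_inv_nat_lt hd
          have : ∀ n ≥ m, g n x = 0 := by
            intro n hn
            apply hg5 n
            intro hmem
            rw [Metric.mem_thickening_iff_infEdist_lt] at hmem
            have h1 : ENNReal.ofReal (1 / (n + 1) : ℝ) ≤ ((m : ENNReal))⁻¹ := by
              rcases Nat.eq_zero_or_pos m with hm0 | hm0
              · simp [hm0]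
              · have hmn : (1 / (n + 1) : ℝ) ≤ 1 / (m : ℝ) := by
                  apply one_div_le_one_div_of_le (by exact_mod_cast hm0)
                  have : (m : ℝ) ≤ n := by exact_mod_cast hn
                  linarith
                calc ENNReal.ofReal (1 / (n + 1) : ℝ) ≤ ENNReal.ofReal (1 / (m : ℝ)) :=
                      ENNReal.ofReal_le_ofReal hmn
                  _ = ((m : ENNReal))⁻¹ := by
                      rw [one_div, ENNReal.ofReal_inv_of_pos (by exact_mod_cast hm0),
                        ENNReal.ofReal_natCast]
            exact absurd (hmem.trans_le (h1.trans hm.le)) (lt_irrefl _)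
          have hic : Set.indicator K (1 : V → ℝ) x = 0 := Set.indicator_of_notMem hx _
          rw [hic]
          exact tendsto_atTop_of_eventually_const (i₀ := m) this
    have h1 := htendsto μ inferInstance
    have h2 := htendsto ν inferInstance
    have heqn : (fun n => ∫ x, g n x ∂μ) = fun n => ∫ x, g n x ∂ν :=
      funext fun n => hsm (g n) (hg1 n) (hg2 n)
    rw [heqn] at h1
    have hμν : (μ K).toReal = (ν K).toReal := tendsto_nhds_unique h1 h2
    exact (ENNReal.toReal_eq_toReal_iff' (measure_ne_top μ K) (measure_ne_top ν K)).mp hμν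
  -- Step 3: closed sets, then ext
  have hclosed : ∀ C : Set V, IsClosed C → μ C = ν C := by
    intro C hC
    have hU : C = ⋃ n : ℕ, C ∩ Metric.closedBall 0 n := by
      ext x
      simp only [Set.mem_iUnion, Set.mem_inter_iff, Metric.mem_closedBall, dist_zero_right]
      constructor
      · intro hx
        obtain ⟨n, hn⟩ := exists_nat_ge ‖x‖
        exact ⟨n, hx, hn⟩
      · rintro ⟨n, hn, -⟩; exact hn
    have hmono : Monotone (fun n : ℕ => C ∩ Metric.closedBall 0 n) := by
      intro a b hab
      exact Set.inter_subset_inter_right C (Metric.closedBall_subset_closedBall (by exact_mod_cast hab))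
    have hcpt : ∀ n : ℕ, IsCompact (C ∩ Metric.closedBall 0 n) :=
      fun n => (isCompact_closedBall 0 n).inter_left hC
    rw [hU, hmono.directed_le.measure_iUnion,
      hmono.directed_le.measure_iUnion]
    exact iSup_congr fun n => hcompact _ (hcpt n)
  refine MeasureTheory.ext_of_generate_finite {s : Set V | IsClosed s} ?_ isPiSystem_isClosed
    (fun s hs => hclosed s hs) (by simp)
  exact BorelSpace.measurable_eq.trans borel_eq_generateFrom_isClosed

lemma contCharKer (w : V) : Continuous fun v : V => (Real.fourierChar ⟪w, v⟫ : ℂ) :=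
  continuous_subtype_val.comp (Real.continuous_fourierChar.comp
    (continuous_const.inner continuous_id))

lemma contChar1 : Continuous fun t : ℝ => (Real.fourierChar t : ℂ) :=
  continuous_subtype_val.comp Real.continuous_fourierChar

lemma measurable_linfun {ι : Type*} [Fintype ι] (a : ι → ℝ) :
    Measurable (fun x : ι → ℝ => ∑ i, a i * x i) :=
  Finset.univ.measurable_sum fun i _ => by fun_prop

lemma cramerWold {ι : Type*} [Fintype ι] (μ ν : Measure (ι → ℝ))
    [IsProbabilityMeasure μ] [IsProbabilityMeasure ν]
    (h : ∀ a : ι → ℝ, μ.map (fun x => ∑ i, a i * x i) = ν.map (fun x => ∑ i, a i * x i)) :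
    μ = ν := by
  set e := (MeasurableEquiv.toLp 2 (ι → ℝ)).symm with he
  have hμ' : IsProbabilityMeasure (μ.map e.symm) :=
    Measure.isProbabilityMeasure_map e.symm.measurable.aemeasurable
  have hν' : IsProbabilityMeasure (ν.map e.symm) :=
    Measure.isProbabilityMeasure_map e.symm.measurable.aemeasurable
  have hinner : ∀ (w : EuclideanSpace ℝ ι) (x : ι → ℝ),
      ⟪w, e.symm x⟫ = ∑ i, w i * x i := by
    intro w x
    rw [PiLp.inner_apply]
    refine Finset.sum_congr rfl fun i _ => ?_
    rw [RCLike.inner_apply, starRingEnd_apply, star_trivial]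
    exact mul_comm _ _
  have hchar : ∀ (ρ : Measure (ι → ℝ)), ∀ w : EuclideanSpace ℝ ι,
      ∫ v, (Real.fourierChar ⟪w, v⟫ : ℂ) ∂(ρ.map e.symm)
        = ∫ t, (Real.fourierChar t : ℂ) ∂(ρ.map (fun x => ∑ i, (w : ι → ℝ) i * x i)) := by
    intro ρ w
    rw [integral_map e.symm.measurable.aemeasurable (contCharKer w).aestronglyMeasurable,
      integral_map (measurable_linfun _).aemeasurable contChar1.aestronglyMeasurable]
    exact integral_congr_ae (.of_forall fun x => by dsimp only; rw [hinner])
  have key : μ.map e.symm = ν.map e.symm := by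
    apply measure_eq_of_charFun
    intro w
    rw [hchar μ w, hchar ν w, h]
  calc μ = (μ.map e.symm).map e := (MeasurableEquiv.map_map_symm e).symm
    _ = (ν.map e.symm).map e := by rw [key]
    _ = ν := MeasurableEquiv.map_map_symm e

end AuxCramerWold

/-- **Gaussian knockoffs are valid.** Let `X ∼ N(0, Σ)` with `Σ` positive
definite, and let `s` be such that `Γ(s)` is positive semidefinite. If the
joint vector `(X, X̃)` is centered Gaussian with covariance `Γ(s)`, then for
every `j`, swapping `X_j` and `X̃_j` leaves the joint Gaussian law unchanged,
i.e. `(X, X̃)` satisfies pairwise exchangeability. -/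
theorem stmt17 {Ω : Type*} [MeasurableSpace Ω] (μ : Measure Ω)
    [IsProbabilityMeasure μ] {p : ℕ}
    (Sig : Matrix (Fin p) (Fin p) ℝ) (hSig : Sig.PosDef)
    (s : Fin p → ℝ) (hΓ : (knockoffCov Sig s).PosSemidef)
    (X Xt : Ω → Fin p → ℝ) (hX : Measurable X) (hXt : Measurable Xt)
    (hXGauss : IsCenteredGaussianVec (μ.map X) Sig)
    (hGauss : IsCenteredGaussianVec
      (μ.map (fun ω => Sum.elim (X ω) (Xt ω))) (knockoffCov Sig s)) :
    ∀ j : Fin p,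
      μ.map (fun ω => swapCoord j (Sum.elim (X ω) (Xt ω))) =
        μ.map (fun ω => Sum.elim (X ω) (Xt ω)) := by
  intro j
  classical
  set σ : (Fin p ⊕ Fin p) ≃ (Fin p ⊕ Fin p) := Equiv.swap (Sum.inl j) (Sum.inr j) with hσ
  have hswap_eq : swapCoord j = fun (x : (Fin p ⊕ Fin p) → ℝ) k => x (σ k) := by
    funext x k
    simp only [swapCoord, hσ, Equiv.swap_apply_def]
    by_cases h1 : k = Sum.inl j
    · simp [h1]
    · by_cases h2 : k = Sum.inr j <;> simp [h1, h2]
  have hswap_meas : Measurable (swapCoord j) := by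
    rw [hswap_eq]
    exact measurable_pi_lambda _ fun k => measurable_pi_apply (σ k)
  have helim : Measurable (fun ω => Sum.elim (X ω) (Xt ω)) := by
    apply measurable_pi_lambda
    rintro (i | i)
    · exact (measurable_pi_apply i).comp hX
    · exact (measurable_pi_apply i).comp hXt
  set Γ := knockoffCov Sig s with hΓdef
  have hΓσ : ∀ k l, Γ (σ k) (σ l) = Γ k l := by
    rintro (i | i) (i' | i') <;>
    · by_cases h1 : i = j <;> by_cases h2 : i' = j <;>
        simp [hσ, hΓdef, knockoffCov, h1, h2, Equiv.swap_apply_def, Sum.inl.injEq, Sum.inr.injEq,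
          Matrix.sub_apply, Matrix.diagonal_apply, Ne.symm]
  have hquad : ∀ a : (Fin p ⊕ Fin p) → ℝ,
      (fun k => a (σ k)) ⬝ᵥ Γ.mulVec (fun k => a (σ k)) = a ⬝ᵥ Γ.mulVec a := by
    intro a
    simp only [dotProduct, Matrix.mulVec, dotProduct]
    calc ∑ k, a (σ k) * ∑ l, Γ k l * a (σ l)
        = ∑ k, a (σ (σ k)) * ∑ l, Γ (σ k) l * a (σ l) := (Equiv.sum_comp σ _).symm
      _ = ∑ k, a k * ∑ l, Γ k l * a l := by
          refine Finset.sum_congr rfl fun k _ => ?_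
          rw [hσ, Equiv.swap_apply_self, ← hσ]
          congr 1
          calc ∑ l, Γ (σ k) l * a (σ l)
              = ∑ l, Γ (σ k) (σ l) * a (σ (σ l)) := (Equiv.sum_comp σ _).symm
            _ = ∑ l, Γ k l * a l := by
                refine Finset.sum_congr rfl fun l _ => ?_
                rw [hΓσ, hσ, Equiv.swap_apply_self]
  set ν₁ : Measure ((Fin p ⊕ Fin p) → ℝ) := μ.map (fun ω => Sum.elim (X ω) (Xt ω)) with hν₁
  have hmap : μ.map (fun ω => swapCoord j (Sum.elim (X ω) (Xt ω))) = ν₁.map (swapCoord j) :=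
    (Measure.map_map hswap_meas helim).symm
  have hprob1 : IsProbabilityMeasure ν₁ := Measure.isProbabilityMeasure_map helim.aemeasurable
  have hprob2 : IsProbabilityMeasure (ν₁.map (swapCoord j)) :=
    Measure.isProbabilityMeasure_map hswap_meas.aemeasurable
  rw [hmap]
  apply cramerWold
  intro a
  have hcomp : (fun x : (Fin p ⊕ Fin p) → ℝ => ∑ i, a i * x i) ∘ (swapCoord j)
      = fun x => ∑ i, (fun k => a (σ k)) i * x i := by
    funext x
    simp only [Function.comp_apply, hswap_eq]
    exact Fintype.sum_equiv σ _ _ fun k => by rw [hσ, Equiv.swap_apply_self]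
  rw [Measure.map_map (measurable_linfun a) hswap_meas, hcomp, hGauss, hGauss a, hquad a]
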